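/- Let U ≥ 0 and let (η_w)_{w=1}^W be positive with ∑_w η_w = 1, and let c ∈ [0, U]. Among all vectors (y_w)_{w=1}^W with 0 ≤ y_1 ≤ y_2 ≤ ... ≤ y_W ≤ U and ∑_w η_w y_w = c, the power ∑_w η_w P_w y_w (with P_1 > P_2 > ... > P_W > 0) is minimized by a threshold vector: there exists T ∈ {1,...,W} and v ∈ [0,U] such that y_w = 0 for w < T, y_T = v, and y_w = U for w > T. -/

import Mathlib

open Finset

/-- Abel-type summation bound: if all head partial sums of `d` over `[1,t]` are
nonnegative and `Q` is nonincreasing on `[1,n]`, then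
`Q n * ∑_{w=1}^n d w ≤ ∑_{w=1}^n d w * Q w`. -/
lemma stmt8_abel (d Q : ℕ → ℝ) :
    ∀ n : ℕ, (∀ t, 1 ≤ t → t ≤ n → 0 ≤ ∑ w ∈ Finset.Icc 1 t, d w) →
      (∀ t, 1 ≤ t → t < n → Q (t + 1) ≤ Q t) →
      Q n * ∑ w ∈ Finset.Icc 1 n, d w ≤ ∑ w ∈ Finset.Icc 1 n, d w * Q w := by
  intro n
  induction n with
  | zero => intro _ _; simp
  | succ n ih =>
    intro hD hQ
    have hsplit : ∀ f : ℕ → ℝ, ∑ w ∈ Finset.Icc 1 (n + 1), f w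
        = (∑ w ∈ Finset.Icc 1 n, f w) + f (n + 1) := by
      intro f
      exact Finset.sum_Icc_succ_top (by omega) f
    rw [hsplit, hsplit]
    rcases Nat.eq_zero_or_pos n with hn | hn
    · subst hn; simp; ring_nf; exact le_refl _
    · have hIH : Q n * ∑ w ∈ Finset.Icc 1 n, d w ≤ ∑ w ∈ Finset.Icc 1 n, d w * Q w :=
        ih (fun t ht1 ht2 => hD t ht1 (by omega)) (fun t ht1 ht2 => hQ t ht1 (by omega))
      have hDn : 0 ≤ ∑ w ∈ Finset.Icc 1 n, d w := hD n hn (by omega)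
      have hQn : Q (n + 1) ≤ Q n := hQ n hn (by omega)
      have h1 : Q (n + 1) * ∑ w ∈ Finset.Icc 1 n, d w
          ≤ Q n * ∑ w ∈ Finset.Icc 1 n, d w := mul_le_mul_of_nonneg_right hQn hDn
      nlinarith [hIH, h1]

/-- Threshold structure of the power-minimizing allocation (Theorem 4):
among nondecreasing vectors `0 ≤ y₁ ≤ ⋯ ≤ y_W ≤ U` with `∑ η_w y_w = c`,
the power `∑ η_w P_w y_w` is minimized by a threshold vector. -/
theorem stmt_8 (W : ℕ) (hW : 1 ≤ W) (U : ℝ) (hU : 0 ≤ U)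
    (η P : ℕ → ℝ) (hη : ∀ w, 0 < η w)
    (hηsum : ∑ w ∈ Finset.Icc 1 W, η w = 1)
    (hPpos : ∀ w, 0 < P w)
    (hPdec : ∀ v u, 1 ≤ v → v < u → u ≤ W → P u < P v)
    (c : ℝ) (hc : c ∈ Set.Icc 0 U) :
    ∃ T ∈ Finset.Icc 1 W, ∃ v ∈ Set.Icc (0:ℝ) U, ∃ z : ℕ → ℝ,
      (∀ w, z w = if w < T then 0 else if w = T then v else U) ∧
      (∀ w ∈ Finset.Icc 1 W, 0 ≤ z w ∧ z w ≤ U) ∧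
      (∀ w₁ ∈ Finset.Icc 1 W, ∀ w₂ ∈ Finset.Icc 1 W, w₁ ≤ w₂ → z w₁ ≤ z w₂) ∧
      (∑ w ∈ Finset.Icc 1 W, η w * z w = c) ∧
      (∀ y : ℕ → ℝ,
        (∀ w ∈ Finset.Icc 1 W, 0 ≤ y w ∧ y w ≤ U) →
        (∀ w₁ ∈ Finset.Icc 1 W, ∀ w₂ ∈ Finset.Icc 1 W, w₁ ≤ w₂ → y w₁ ≤ y w₂) →
        (∑ w ∈ Finset.Icc 1 W, η w * y w = c) →
        ∑ w ∈ Finset.Icc 1 W, η w * P w * z w ≤ ∑ w ∈ Finset.Icc 1 W, η w * P w * y w) := by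
  obtain ⟨hc0, hcU⟩ := hc
  set tail : ℕ → ℝ := fun t => ∑ w ∈ Finset.Icc t W, η w with htail
  set S : Finset ℕ := (Finset.Icc 1 W).filter (fun t => c ≤ U * tail t) with hS
  have h1S : 1 ∈ S := by
    refine Finset.mem_filter.mpr ⟨Finset.mem_Icc.mpr ⟨le_refl _, hW⟩, ?_⟩
    simpa [htail, hηsum] using hcU
  set T : ℕ := S.max' ⟨1, h1S⟩ with hTdef
  have hTS : T ∈ S := Finset.max'_mem _ _
  obtain ⟨hTIcc, hcT⟩ := Finset.mem_filter.mp hTS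
  obtain ⟨hT1, hTW⟩ := Finset.mem_Icc.mp hTIcc
  -- tail split: tail T = η T + tail (T+1)
  have hins : insert T (Finset.Ioc T W) = Finset.Icc T W := Finset.Ioc_insert_left hTW
  have hIoc : Finset.Icc (T + 1) W = Finset.Ioc T W := Finset.Icc_add_one_left_eq_Ioc T W
  have htailsplit : tail T = η T + tail (T + 1) := by
    simp only [htail, hIoc]
    rw [← hins, Finset.sum_insert (by simp)]
  -- lower bound: U * tail (T+1) ≤ c
  have hlow : U * tail (T + 1) ≤ c := by
    rcases Nat.lt_or_ge T W with hTlt | hTge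
    · by_contra hcon
      push_neg at hcon
      have hmem : T + 1 ∈ S := Finset.mem_filter.mpr
        ⟨Finset.mem_Icc.mpr ⟨by omega, by omega⟩, le_of_lt hcon⟩
      have := Finset.le_max' S (T + 1) hmem
      omega
    · have hTW' : T = W := le_antisymm hTW hTge
      have hemp : Finset.Icc (T + 1) W = ∅ := Finset.Icc_eq_empty (by omega)
      have : tail (T + 1) = 0 := by simp [htail, hemp]
      rw [this]; simpa using hc0
  set v : ℝ := (c - U * tail (T + 1)) / η T with hv
  have hηT := hη T
  have hηv : η T * v = c - U * tail (T + 1) := by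
    rw [hv, mul_div_cancel₀ _ hηT.ne']
  have hv0 : 0 ≤ v := div_nonneg (by linarith) hηT.le
  have hvU : v ≤ U := by
    have h1 : η T * v ≤ η T * U := by
      rw [hηv]
      have h2 : c ≤ U * (η T + tail (T + 1)) := by rw [← htailsplit]; exact hcT
      nlinarith
    exact le_of_mul_le_mul_left h1 hηT
  set z : ℕ → ℝ := fun w => if w < T then 0 else if w = T then v else U with hz
  have hzval : ∀ w, z w = if w < T then 0 else if w = T then v else U := fun w => rfl
  have hzbd : ∀ w, 0 ≤ z w ∧ z w ≤ U := by
    intro w; rw [hzval w]; split_ifs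
    · exact ⟨le_refl _, hU⟩
    · exact ⟨hv0, hvU⟩
    · exact ⟨hU, le_refl _⟩
  -- the sum of z
  have hzsum : ∑ w ∈ Finset.Icc 1 W, η w * z w = c := by
    have hIcc1 : Finset.Icc 1 W = Finset.Ioc 0 W := Finset.Icc_add_one_left_eq_Ioc 0 W
    rw [hIcc1, ← Finset.sum_Ioc_consecutive (fun w => η w * z w) (Nat.zero_le T) hTW]
    have hleft : ∑ w ∈ Finset.Ioc 0 T, η w * z w = η T * v := by
      rw [Finset.sum_eq_single_of_mem T (Finset.mem_Ioc.mpr ⟨by omega, le_refl _⟩)]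
      · rw [hzval T]; simp
      · intro w hw hwne
        have hwT : w < T := by
          have := Finset.mem_Ioc.mp hw; omega
        rw [hzval w, if_pos hwT, mul_zero]
    have hright : ∑ w ∈ Finset.Ioc T W, η w * z w = U * tail (T + 1) := by
      rw [show (U * tail (T+1)) = ∑ w ∈ Finset.Ioc T W, η w * U by
        rw [htail]; simp only [hIoc]; rw [Finset.mul_sum]; exact Finset.sum_congr rfl (fun w _ => mul_comm U (η w))]
      refine Finset.sum_congr rfl (fun w hw => ?_)
      have hwT := Finset.mem_Ioc.mp hw
      rw [hzval w, if_neg (by omega), if_neg (by omega)]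
    rw [hleft, hright, hηv]; ring
  refine ⟨T, hTIcc, v, ⟨hv0, hvU⟩, z, hzval, fun w _ => hzbd w, ?_, hzsum, ?_⟩
  · -- monotonicity
    intro w₁ _ w₂ _ hle
    rw [hzval w₁, hzval w₂]
    split_ifs with h1 h2 h3 h4 h5 h6 h7
    all_goals first
      | exact le_refl _ | exact hv0 | exact hU | exact hvU | omega
  · -- optimality
    intro y hyb _ hys
    set d : ℕ → ℝ := fun w => η w * (y w - z w) with hd
    have hDtot : ∑ w ∈ Finset.Icc 1 W, d w = 0 := by
      simp only [hd, mul_sub]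
      rw [Finset.sum_sub_distrib, hys, hzsum, sub_self]
    have hDnn : ∀ t, 1 ≤ t → t ≤ W → 0 ≤ ∑ w ∈ Finset.Icc 1 t, d w := by
      intro t ht1 htW
      rcases Nat.lt_or_ge t T with htT | htT
      · refine Finset.sum_nonneg (fun w hw => ?_)
        have hw' := Finset.mem_Icc.mp hw
        have hz0 : z w = 0 := by rw [hzval w, if_pos (by omega)]
        have hy0 : 0 ≤ y w := (hyb w (Finset.mem_Icc.mpr ⟨hw'.1, le_trans hw'.2 htW⟩)).1
        simp only [hd, hz0, sub_zero]
        exact mul_nonneg (hη w).le hy0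
      · have hsplit : (∑ w ∈ Finset.Icc 1 t, d w) + ∑ w ∈ Finset.Ioc t W, d w
            = ∑ w ∈ Finset.Icc 1 W, d w := by
          rw [(have h : Finset.Icc 1 W = Finset.Ioc 0 W := Finset.Icc_add_one_left_eq_Ioc 0 W; h), (have h : Finset.Icc 1 t = Finset.Ioc 0 t := Finset.Icc_add_one_left_eq_Ioc 0 t; h)]
          exact Finset.sum_Ioc_consecutive d (Nat.zero_le t) htW
        have hright : ∑ w ∈ Finset.Ioc t W, d w ≤ 0 := by
          refine Finset.sum_nonpos (fun w hw => ?_)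
          have hw' := Finset.mem_Ioc.mp hw
          have hzU : z w = U := by rw [hzval w, if_neg (by omega), if_neg (by omega)]
          have hyU : y w ≤ U := (hyb w (Finset.mem_Icc.mpr ⟨by omega, hw'.2⟩)).2
          simp only [hd, hzU]
          exact mul_nonpos_of_nonneg_of_nonpos (hη w).le (by linarith)
        linarith [hDtot, hsplit]
    have hQ : ∀ t, 1 ≤ t → t < W → P (t + 1) ≤ P t :=
      fun t ht1 htW => (hPdec t (t + 1) ht1 (by omega) (by omega)).le
    have habel := stmt8_abel d P W hDnn hQ
    rw [hDtot, mul_zero] at habel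
    have hexp : ∑ w ∈ Finset.Icc 1 W, d w * P w
        = (∑ w ∈ Finset.Icc 1 W, η w * P w * y w) - ∑ w ∈ Finset.Icc 1 W, η w * P w * z w := by
      rw [← Finset.sum_sub_distrib]
      exact Finset.sum_congr rfl (fun w _ => by simp only [hd]; ring)
    linarith [habel, hexp.symm.le, hexp.le]
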